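/- (Scalar core of the PML coercivity estimates (4.17) and (4.24).) Let s ∈ ℂ with s₁ = Re(s) > 0, let σ₀ > 0 and set M = 1 + σ₀/s₁. If β and γ are real numbers with M⁻² ≤ β ≤ M and M⁻¹ ≤ γ ≤ M², then for all real a, b ≥ 0 one has Re(s⁻¹·β·a + s·γ·b) ≥ M⁻²·(s₁/|s|²)·(a + |s|²·b). -/

import Mathlib

/-- Scalar core of the PML coercivity estimates (4.17) and (4.24):
Re(s⁻¹ β a + s γ b) ≥ M⁻² (s₁/|s|²)(a + |s|² b) whenever M⁻² ≤ β ≤ M and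
M⁻¹ ≤ γ ≤ M², with M = 1 + σ₀/s₁ and s₁ = Re s > 0. -/
theorem pml_coercivity_scalar (s : ℂ) (hs : 0 < s.re)
    (σ₀ : ℝ) (hσ₀ : 0 < σ₀) (M : ℝ) (hM : M = 1 + σ₀ / s.re)
    (β γ : ℝ) (hβ : (M ^ 2)⁻¹ ≤ β ∧ β ≤ M) (hγ : M⁻¹ ≤ γ ∧ γ ≤ M ^ 2)
    (a b : ℝ) (ha : 0 ≤ a) (hb : 0 ≤ b) :
    (M ^ 2)⁻¹ * (s.re / ‖s‖ ^ 2) * (a + ‖s‖ ^ 2 * b) ≤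
      (s⁻¹ * (β : ℂ) * (a : ℂ) + s * (γ : ℂ) * (b : ℂ)).re := by
  have hM1 : 1 < M := by
    rw [hM]; nlinarith [div_pos hσ₀ hs]
  have hM0 : 0 < M := by linarith
  have hs0 : s ≠ 0 := fun h => by simp [h] at hs
  have habs : (0:ℝ) < ‖s‖ ^ 2 := pow_pos (norm_pos_iff.mpr hs0) 2
  have hre : (s⁻¹ * (β : ℂ) * (a : ℂ) + s * (γ : ℂ) * (b : ℂ)).re
      = β * a * (s.re / ‖s‖ ^ 2) + γ * b * s.re := by
    simp [Complex.add_re, Complex.mul_re, Complex.inv_re, Complex.inv_im,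
      Complex.normSq_eq_norm_sq]
    ring
  rw [hre]
  have h1 : (M ^ 2)⁻¹ ≤ γ := le_trans (by
    rw [inv_le_inv₀ (by positivity) hM0]; nlinarith) hγ.1
  have hd : 0 < s.re / ‖s‖ ^ 2 := by positivity
  have hinv : (0:ℝ) < (M ^ 2)⁻¹ := by positivity
  have e1 : (M ^ 2)⁻¹ * (s.re / ‖s‖ ^ 2) * a ≤ β * a * (s.re / ‖s‖ ^ 2) := by
    nlinarith [hβ.1, mul_nonneg (mul_nonneg hd.le ha) (sub_nonneg.mpr hβ.1)]
  have e2 : (M ^ 2)⁻¹ * (s.re / ‖s‖ ^ 2) * (‖s‖ ^ 2 * b) ≤ γ * b * s.re := by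
    have : (M ^ 2)⁻¹ * (s.re / ‖s‖ ^ 2) * (‖s‖ ^ 2 * b)
        = (M ^ 2)⁻¹ * b * s.re := by field_simp
    rw [this]
    nlinarith [mul_nonneg (mul_nonneg hs.le hb) (sub_nonneg.mpr h1)]
  nlinarith [e1, e2]
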